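/- Let p be a prime and let R be a noncommutative ring with unity of order p³. Then |Cent(R)| = p + 2. -/
import Mathlib


/-- The centralizer of `r` in a (not necessarily unital) ring: `{s | r*s = s*r}`. -/
def rCentralizer {R : Type*} [NonUnitalRing R] (r : R) : Set R := {s | r * s = s * r}

/-- The set of all centralizers of elements of `R`. -/
def Cent (R : Type*) [NonUnitalRing R] : Set (Set R) :=
  Set.range (fun r : R => rCentralizer r)

/-- The center of a (not necessarily unital) ring, as a set. -/
def rCenter (R : Type*) [NonUnitalRing R] : Set R := {s | ∀ r : R, r * s = s * r}

section helpers

variable {R : Type*} [Ring R]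

/-- The centralizer of an element as an additive subgroup. -/
def centAdd (r : R) : AddSubgroup R where
  carrier := rCentralizer r
  add_mem' := by
    intro a b ha hb
    simp only [rCentralizer, Set.mem_setOf_eq] at *
    rw [mul_add, add_mul, ha, hb]
  zero_mem' := by simp [rCentralizer]
  neg_mem' := by
    intro a ha
    simp only [rCentralizer, Set.mem_setOf_eq] at *
    rw [mul_neg, neg_mul, ha]

/-- The center as an additive subgroup. -/
def cenAdd (R : Type*) [Ring R] : AddSubgroup R where
  carrier := rCenter R
  add_mem' := by
    intro a b ha hb
    intro t
    rw [mul_add, add_mul, ha t, hb t]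
  zero_mem' := by intro t; simp
  neg_mem' := by
    intro a ha t
    rw [mul_neg, neg_mul, ha t]

lemma rCenter_subset_rCentralizer (r : R) : rCenter R ⊆ rCentralizer r :=
  fun _ hs => hs r

lemma self_mem_rCentralizer (r : R) : r ∈ rCentralizer r := rfl

lemma rCentralizer_eq_univ_of_mem {r : R} (hr : r ∈ rCenter R) :
    rCentralizer r = Set.univ := by
  ext s
  simp only [Set.mem_univ, iff_true]
  exact (hr s).symm

lemma mem_rCenter_of_rCentralizer_eq_univ {r : R} (hr : rCentralizer r = Set.univ) :
    r ∈ rCenter R := by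
  intro t
  have : t ∈ rCentralizer r := hr ▸ Set.mem_univ t
  exact this.symm

end helpers

/-- A noncommutative ring with unity of order `p³` has exactly `p + 2` centralizers. -/
theorem cent_of_card_p_cube (p : ℕ) (hp : p.Prime) (R : Type*) [Ring R] [Finite R]
    (hcard : Nat.card R = p ^ 3) (h : ∃ x y : R, x * y ≠ y * x) :
    (Cent R).ncard = p + 2 := by
  classical
  obtain ⟨x, y, hxy⟩ := h
  have hp1 : 1 < p := hp.one_lt
  have hnt : Nontrivial R := ⟨⟨x * y, y * x, hxy⟩⟩
  set Z : Set R := rCenter R with hZdef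
  have hZfin : Z.Finite := Set.toFinite _
  have hdvd : ∀ A : AddSubgroup R, ((A : Set R)).ncard ∣ p ^ 3 := by
    intro A
    rw [← hcard, ← Nat.card_coe_set_eq]
    exact AddSubgroup.card_addSubgroup_dvd_card A
  have hZdvd : Z.ncard ∣ p ^ 3 := hdvd (cenAdd R)
  have hunivcard : (Set.univ : Set R).ncard = p ^ 3 := by rw [Set.ncard_univ, hcard]
  have hy : y ∉ Z := fun hy => hxy (hy x)
  -- |Z| ≥ 2
  have hZ2 : 2 ≤ Z.ncard := by
    have hsub : ({0, 1} : Set R) ⊆ Z := by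
      rintro a (rfl | rfl)
      · exact (cenAdd R).zero_mem
      · intro t; simp
    calc 2 = ({0, 1} : Set R).ncard := (Set.ncard_pair (zero_ne_one)).symm
    _ ≤ Z.ncard := Set.ncard_le_ncard hsub hZfin
  have hZne3 : Z.ncard ≠ p ^ 3 := by
    intro hc
    have : Z = Set.univ :=
      Set.eq_of_subset_of_ncard_le (Set.subset_univ _) (by rw [hunivcard, hc]) (Set.toFinite _)
    exact hy (this ▸ Set.mem_univ y)
  have hCgt : ∀ r : R, r ∉ Z → Z.ncard < (rCentralizer r).ncard := by
    intro r hr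
    refine Set.ncard_lt_ncard ⟨rCenter_subset_rCentralizer r, fun hsub => ?_⟩ (Set.toFinite _)
    exact hr (hsub (self_mem_rCentralizer r))
  have hCne3 : ∀ r : R, r ∉ Z → (rCentralizer r).ncard ≠ p ^ 3 := by
    intro r hr hc
    have : rCentralizer r = Set.univ :=
      Set.eq_of_subset_of_ncard_le (Set.subset_univ _) (by rw [hunivcard, hc]) (Set.toFinite _)
    exact hr (mem_rCenter_of_rCentralizer_eq_univ this)
  -- |Z| = p
  have hZcard : Z.ncard = p := by
    obtain ⟨k, hk3, hkZ⟩ := (Nat.dvd_prime_pow hp).mp hZdvd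
    interval_cases k
    · rw [pow_zero] at hkZ; omega
    · simpa using hkZ
    · -- |Z| = p² : contradiction using C(y)
      exfalso
      obtain ⟨m, hm3, hmC⟩ := (Nat.dvd_prime_pow hp).mp (hdvd (centAdd y))
      have hCy : (rCentralizer y).ncard = p ^ m := hmC
      have hlt : p ^ 2 < p ^ m := by rw [← hCy, ← hkZ]; exact hCgt y hy
      have hm : m = 3 := by
        have : 2 < m := (Nat.pow_lt_pow_iff_right hp1).mp hlt
        omega
      exact hCne3 y hy (hm ▸ hCy)
    · exact absurd hkZ hZne3
  -- centralizers of noncentral elements have cardinality p²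
  have hCcard : ∀ r : R, r ∉ Z → (rCentralizer r).ncard = p ^ 2 := by
    intro r hr
    obtain ⟨m, hm3, hmC⟩ := (Nat.dvd_prime_pow hp).mp (hdvd (centAdd r))
    have hCr : (rCentralizer r).ncard = p ^ m := hmC
    have hlt : p ^ 1 < p ^ m := by
      rw [pow_one, ← hCr, ← hZcard]; exact hCgt r hr
    have hm1 : 1 < m := (Nat.pow_lt_pow_iff_right hp1).mp hlt
    have hm2 : m = 2 := by
      rcases Nat.lt_or_ge m 3 with h3 | h3
      · omega
      · exfalso
        have : m = 3 := by omega
        exact hCne3 r hr (this ▸ hCr)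
    rw [hCr, hm2]
  -- key lemma: centralizers of commuting noncentral elements coincide
  have hkey : ∀ r s : R, r ∉ Z → s ∉ Z → s ∈ rCentralizer r →
      rCentralizer s = rCentralizer r := by
    intro r s hr hs hsr
    set A : AddSubgroup R := AddSubgroup.closure (Z ∪ {r}) with hA
    have hAsub : (A : Set R) ⊆ rCentralizer r := by
      have : A ≤ centAdd r := hA ▸ (AddSubgroup.closure_le _).mpr
        (Set.union_subset (rCenter_subset_rCentralizer r)
          (Set.singleton_subset_iff.mpr (self_mem_rCentralizer r)))
      exact this
    have hZA : Z ⊆ (A : Set R) :=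
      fun a ha => AddSubgroup.subset_closure (Or.inl ha)
    have hrA : r ∈ (A : Set R) := AddSubgroup.subset_closure (Or.inr rfl)
    have hAgt : p < (A : Set R).ncard := by
      rw [← hZcard]
      exact Set.ncard_lt_ncard ⟨hZA, fun hsub => hr (hsub hrA)⟩ (Set.toFinite _)
    have hAle : (A : Set R).ncard ≤ p ^ 2 := by
      rw [← hCcard r hr]
      exact Set.ncard_le_ncard hAsub (Set.toFinite _)
    have hAcard : (A : Set R).ncard = p ^ 2 := by
      obtain ⟨m, hm3, hmA⟩ := (Nat.dvd_prime_pow hp).mp (hdvd A)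
      have h1 : p ^ 1 < p ^ m := by rw [pow_one, ← hmA]; exact hAgt
      have h2 : p ^ m ≤ p ^ 2 := hmA ▸ hAle
      have hm1 : 1 < m := (Nat.pow_lt_pow_iff_right hp1).mp h1
      have hm2 : m ≤ 2 := (Nat.pow_le_pow_iff_right hp1).mp h2
      rw [hmA]
      congr 1
      omega
    have hAeq : (A : Set R) = rCentralizer r :=
      Set.eq_of_subset_of_ncard_le hAsub
        (by rw [hAcard, hCcard r hr]) (Set.toFinite _)
    have hsubset : rCentralizer r ⊆ rCentralizer s := by
      intro t ht
      have hsA : s ∈ (A : Set R) := hAeq ▸ hsr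
      have : A ≤ centAdd t := hA ▸ (AddSubgroup.closure_le _).mpr
        (Set.union_subset (fun a ha => ha t)
          (Set.singleton_subset_iff.mpr ht.symm))
      have hst : s ∈ rCentralizer t := this hsA
      exact hst.symm
    exact (Set.eq_of_subset_of_ncard_le hsubset
      (by rw [hCcard s hs, hCcard r hr]) (Set.toFinite _)).symm
  -- counting
  have : Fintype R := Fintype.ofFinite R
  set NC : Finset R := (Set.toFinite Zᶜ).toFinset with hNC
  have hNCmem : ∀ s : R, s ∈ NC ↔ s ∉ Z := by
    intro s; rw [hNC, Set.Finite.mem_toFinset, Set.mem_compl_iff]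
  set T : Finset (Set R) := NC.image (fun r => rCentralizer r) with hT
  have hfiber : ∀ C ∈ T, (NC.filter (fun s => rCentralizer s = C)).card = p ^ 2 - p := by
    intro C hC
    obtain ⟨r, hrNC, hrC⟩ := Finset.mem_image.mp hC
    have hr : r ∉ Z := (hNCmem r).mp hrNC
    have hset : (↑(NC.filter (fun s => rCentralizer s = C)) : Set R) = rCentralizer r \ Z := by
      ext s
      simp only [Finset.coe_filter, Set.mem_setOf_eq, hNCmem, Set.mem_diff]
      constructor
      · rintro ⟨hs, hCs⟩
        have : s ∈ rCentralizer s := self_mem_rCentralizer s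
        rw [hCs, ← hrC] at this
        exact ⟨this, hs⟩
      · rintro ⟨hsr, hs⟩
        exact ⟨hs, by rw [hkey r s hr hs hsr, hrC]⟩
    have : (NC.filter (fun s => rCentralizer s = C)).card
        = (rCentralizer r \ Z).ncard := by
      rw [← hset, Set.ncard_coe_finset]
    rw [this, Set.ncard_diff (rCenter_subset_rCentralizer r) hZfin, hCcard r hr, hZcard]
  have hNCcard : NC.card = p ^ 3 - p := by
    have : (↑NC : Set R) = Set.univ \ Z := by
      rw [hNC, Set.Finite.coe_toFinset, Set.compl_eq_univ_diff]
    have h2 : NC.card = (Set.univ \ Z).ncard := by rw [← this, Set.ncard_coe_finset]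
    rw [h2, Set.ncard_diff (Set.subset_univ _) hZfin, hunivcard, hZcard]
  have hsum : NC.card = T.card * (p ^ 2 - p) := by
    rw [Finset.card_eq_sum_card_fiberwise (f := fun r : R => rCentralizer r) (t := T)
      (fun x hx => Finset.mem_image_of_mem _ hx)]
    rw [Finset.sum_congr rfl hfiber, Finset.sum_const, smul_eq_mul]
  have hple2 : p ≤ p ^ 2 := Nat.le_self_pow (by norm_num) p
  have hple3 : p ≤ p ^ 3 := Nat.le_self_pow (by norm_num) p
  have harith : (p + 1) * (p ^ 2 - p) = p ^ 3 - p := by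
    zify [hple2, hple3]
    ring
  have hTcard : T.card = p + 1 := by
    have hpos : 0 < p ^ 2 - p := by
      have : p ^ 1 < p ^ 2 := (Nat.pow_lt_pow_iff_right hp1).mpr (by omega)
      rw [pow_one] at this
      omega
    have : T.card * (p ^ 2 - p) = (p + 1) * (p ^ 2 - p) := by
      rw [← hsum, hNCcard, harith]
    exact Nat.eq_of_mul_eq_mul_right hpos this
  -- Cent R = insert univ T
  have hCent : Cent R = insert Set.univ (↑T : Set (Set R)) := by
    rw [hT, Finset.coe_image]
    ext C
    simp only [Cent, Set.mem_range, Set.mem_insert_iff, Set.mem_image, Finset.mem_coe]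
    constructor
    · rintro ⟨r, rfl⟩
      by_cases hr : r ∈ Z
      · exact Or.inl (rCentralizer_eq_univ_of_mem hr)
      · exact Or.inr ⟨r, (hNCmem r).mpr hr, rfl⟩
    · rintro (rfl | ⟨r, _, rfl⟩)
      · refine ⟨0, ?_⟩
        ext s; simp [rCentralizer]
      · exact ⟨r, rfl⟩
  have huniv_not : Set.univ ∉ (↑T : Set (Set R)) := by
    rintro hmem
    rw [hT, Finset.coe_image] at hmem
    obtain ⟨r, hrNC, hrC⟩ := hmem
    exact ((hNCmem r).mp hrNC) (mem_rCenter_of_rCentralizer_eq_univ hrC)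
  rw [hCent, Set.ncard_insert_of_notMem huniv_not (Set.toFinite _),
    Set.ncard_coe_finset, hTcard]
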